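/- Let X be the 2-truncated simplicial set of the previous context with X_2 = {(0,0),(1,0),(0,1)} ⊔ A, and partition the two taco spaces X_2 ×_{d_1,d_2} X_2 and X_2 ×_{d_0,d_1} X_2 according to the values (i,j,k) of the boundary edge maps (e_1,e_2,e_3). Then for each (i,j,k) ∈ {0,1}³, the corresponding pieces M_{ijk} and M'_{ijk} have equal cardinality: both are singletons for (i,j,k) ∈ {(0,0,0),(1,0,0),(0,1,0),(0,0,1)}, and both are in bijection with A for the remaining four values. Hence the two taco spaces are isomorphic as spans from (X_1)³ to X_1. -/

import Mathlib

/- The 2-truncated simplicial set with `X₀ = {0}`, `X₁ = {0,1}` and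
`X₂ = {(0,0),(1,0),(0,1)} ⊔ A`, from Example `nolift`. -/

/-- `X₂ = {(0,0),(1,0),(0,1)} ⊔ A`, encoded as pairs in `Fin 2 × Fin 2`
other than `(1,1)`, together with the set `A`. -/
abbrev X2 (A : Type) : Type := {p : Fin 2 × Fin 2 // p ≠ (1, 1)} ⊕ A

/-- The face map `d₀ : X₂ → X₁`: `d₀ (k,ℓ) = ℓ` and `d₀ a = 1` for `a ∈ A`. -/
def d0 {A : Type} : X2 A → Fin 2
  | Sum.inl p => p.1.2
  | Sum.inr _ => 1

/-- The face map `d₁ : X₂ → X₁`: `d₁ (k,ℓ) = k + ℓ` and `d₁ a = 0` for `a ∈ A`. -/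
def d1 {A : Type} : X2 A → Fin 2
  | Sum.inl p => p.1.1 + p.1.2
  | Sum.inr _ => 0

/-- The face map `d₂ : X₂ → X₁`: `d₂ (k,ℓ) = k` and `d₂ a = 1` for `a ∈ A`. -/
def d2 {A : Type} : X2 A → Fin 2
  | Sum.inl p => p.1.1
  | Sum.inr _ => 1

/-- The piece `M_{ijk}` of the taco space `X₂ ×_{d₁,d₂} X₂`, with boundary
edges `e₁ = d₂ξ = i`, `e₂ = d₀ξ = j`, `e₃ = d₀ξ' = k`. -/
def Mset (A : Type) (i j k : Fin 2) : Set (X2 A × X2 A) :=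
  {t | d1 t.1 = d2 t.2 ∧ d2 t.1 = i ∧ d0 t.1 = j ∧ d0 t.2 = k}

/-- The piece `M'_{ijk}` of the taco space `X₂ ×_{d₀,d₁} X₂`, with boundary
edges `e₁ = d₂ξ = i`, `e₂ = d₂ξ' = j`, `e₃ = d₀ξ' = k`. -/
def M'set (A : Type) (i j k : Fin 2) : Set (X2 A × X2 A) :=
  {t | d0 t.1 = d1 t.2 ∧ d2 t.1 = i ∧ d2 t.2 = j ∧ d0 t.2 = k}

/-- Collapse `A` to a point. -/
def phi {A : Type} : X2 A → X2 Unit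
  | Sum.inl p => Sum.inl p
  | Sum.inr _ => Sum.inr ()

lemma d0_phi {A : Type} (x : X2 A) : d0 (phi x) = d0 x := by rcases x with p | a <;> rfl
lemma d1_phi {A : Type} (x : X2 A) : d1 (phi x) = d1 x := by rcases x with p | a <;> rfl
lemma d2_phi {A : Type} (x : X2 A) : d2 (phi x) = d2 x := by rcases x with p | a <;> rfl

lemma phi_eq_inl {A : Type} (x : X2 A) (p) : phi x = Sum.inl p ↔ x = Sum.inl p := by
  rcases x with q | a <;> simp [phi]

lemma phi_eq_inr {A : Type} (x : X2 A) : phi x = Sum.inr () ↔ ∃ a, x = Sum.inr a := by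
  rcases x with q | a <;> simp [phi]

lemma mem_Mset_iff {A : Type} (i j k : Fin 2) (t : X2 A × X2 A) :
    t ∈ Mset A i j k ↔ (phi t.1, phi t.2) ∈ Mset Unit i j k := by
  simp [Mset, d0_phi, d1_phi, d2_phi]

lemma mem_M'set_iff {A : Type} (i j k : Fin 2) (t : X2 A × X2 A) :
    t ∈ M'set A i j k ↔ (phi t.1, phi t.2) ∈ M'set Unit i j k := by
  simp [M'set, d0_phi, d1_phi, d2_phi]

instance (i j k : Fin 2) (t : X2 Unit × X2 Unit) : Decidable (t ∈ Mset Unit i j k) :=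
  decidable_of_iff (d1 t.1 = d2 t.2 ∧ d2 t.1 = i ∧ d0 t.1 = j ∧ d0 t.2 = k) Iff.rfl

instance (i j k : Fin 2) (t : X2 Unit × X2 Unit) : Decidable (t ∈ M'set Unit i j k) :=
  decidable_of_iff (d0 t.1 = d1 t.2 ∧ d2 t.1 = i ∧ d2 t.2 = j ∧ d0 t.2 = k) Iff.rfl

section General
variable {A : Type} (S : (B : Type) → Set (X2 B × X2 B))
  (hS : ∀ (B : Type) (t : X2 B × X2 B), t ∈ S B ↔ (phi t.1, phi t.2) ∈ S Unit)

/-- Singleton case. -/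
def uniqueOf (p q : {p : Fin 2 × Fin 2 // p ≠ (1, 1)})
    (h1 : (Sum.inl p, Sum.inl q) ∈ S Unit)
    (h2 : ∀ s ∈ S Unit, s = (Sum.inl p, Sum.inl q)) : Unique (S A) where
  default := ⟨(Sum.inl p, Sum.inl q), (hS A _).mpr h1⟩
  uniq := by
    rintro ⟨⟨x, y⟩, ht⟩
    have h := h2 _ ((hS A _).mp ht)
    rw [Prod.mk.injEq] at h
    have hx := (phi_eq_inl x p).mp h.1
    have hy := (phi_eq_inl y q).mp h.2
    exact Subtype.ext (Prod.ext hx hy)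

/-- `A` in the second slot. -/
noncomputable def equivARight (p : {p : Fin 2 × Fin 2 // p ≠ (1, 1)})
    (h1 : (Sum.inl p, Sum.inr ()) ∈ S Unit)
    (h2 : ∀ s ∈ S Unit, s = (Sum.inl p, Sum.inr ())) : S A ≃ A := by
  refine (Equiv.ofBijective (fun a : A => (⟨(Sum.inl p, Sum.inr a), (hS A _).mpr h1⟩ : S A))
    ⟨fun a b hab => ?_, ?_⟩).symm
  · simpa using hab
  · rintro ⟨⟨x, y⟩, ht⟩
    have h := h2 _ ((hS A _).mp ht)
    rw [Prod.mk.injEq] at h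
    have hx := (phi_eq_inl x p).mp h.1
    obtain ⟨a, ha⟩ := (phi_eq_inr y).mp h.2
    exact ⟨a, Subtype.ext (Prod.ext hx.symm ha.symm)⟩

/-- `A` in the first slot. -/
noncomputable def equivALeft (q : {p : Fin 2 × Fin 2 // p ≠ (1, 1)})
    (h1 : (Sum.inr (), Sum.inl q) ∈ S Unit)
    (h2 : ∀ s ∈ S Unit, s = (Sum.inr (), Sum.inl q)) : S A ≃ A := by
  refine (Equiv.ofBijective (fun a : A => (⟨(Sum.inr a, Sum.inl q), (hS A _).mpr h1⟩ : S A))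
    ⟨fun a b hab => ?_, ?_⟩).symm
  · simpa using hab
  · rintro ⟨⟨x, y⟩, ht⟩
    have h := h2 _ ((hS A _).mp ht)
    rw [Prod.mk.injEq] at h
    obtain ⟨a, ha⟩ := (phi_eq_inr x).mp h.1
    have hy := (phi_eq_inl y q).mp h.2
    exact ⟨a, Subtype.ext (Prod.ext ha.symm hy.symm)⟩

end General

/-- For each `(i,j,k)` the pieces `M_{ijk}` and `M'_{ijk}` have the same
cardinality: both are singletons for `(i,j,k) ∈ {(0,0,0),(1,0,0),(0,1,0),(0,0,1)}`
and both are in bijection with `A` for the remaining four values; hence the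
two taco spaces are isomorphic as spans from `(X₁)³` to `X₁`. -/
theorem taco_pieces_equiv (A : Type) :
    (∀ i j k : Fin 2, Nonempty (Mset A i j k ≃ M'set A i j k)) ∧
    (∀ i j k : Fin 2,
      ((i, j, k) = (0, 0, 0) ∨ (i, j, k) = (1, 0, 0) ∨
       (i, j, k) = (0, 1, 0) ∨ (i, j, k) = (0, 0, 1)) →
      Nonempty (Unique (Mset A i j k)) ∧ Nonempty (Unique (M'set A i j k))) ∧
    (∀ i j k : Fin 2,
      ¬((i, j, k) = (0, 0, 0) ∨ (i, j, k) = (1, 0, 0) ∨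
        (i, j, k) = (0, 1, 0) ∨ (i, j, k) = (0, 0, 1)) →
      Nonempty (Mset A i j k ≃ A) ∧ Nonempty (M'set A i j k ≃ A)) := by
  have hM : ∀ i j k : Fin 2, ∀ (B : Type) (t : X2 B × X2 B),
      t ∈ Mset B i j k ↔ (phi t.1, phi t.2) ∈ Mset Unit i j k :=
    fun i j k B t => mem_Mset_iff i j k t
  have hM' : ∀ i j k : Fin 2, ∀ (B : Type) (t : X2 B × X2 B),
      t ∈ M'set B i j k ↔ (phi t.1, phi t.2) ∈ M'set Unit i j k :=
    fun i j k B t => mem_M'set_iff i j k t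
  have part2 : ∀ i j k : Fin 2,
      ((i, j, k) = (0, 0, 0) ∨ (i, j, k) = (1, 0, 0) ∨
       (i, j, k) = (0, 1, 0) ∨ (i, j, k) = (0, 0, 1)) →
      Nonempty (Unique (Mset A i j k)) ∧ Nonempty (Unique (M'set A i j k)) := by
    intro i j k h
    rcases h with h | h | h | h <;>
      (simp only [Prod.mk.injEq] at h; obtain ⟨rfl, rfl, rfl⟩ := h)
    · exact ⟨⟨uniqueOf _ (hM 0 0 0) ⟨(0,0), by decide⟩ ⟨(0,0), by decide⟩ (by decide) (by decide)⟩,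
        ⟨uniqueOf _ (hM' 0 0 0) ⟨(0,0), by decide⟩ ⟨(0,0), by decide⟩ (by decide) (by decide)⟩⟩
    · exact ⟨⟨uniqueOf _ (hM 1 0 0) ⟨(1,0), by decide⟩ ⟨(1,0), by decide⟩ (by decide) (by decide)⟩,
        ⟨uniqueOf _ (hM' 1 0 0) ⟨(1,0), by decide⟩ ⟨(0,0), by decide⟩ (by decide) (by decide)⟩⟩
    · exact ⟨⟨uniqueOf _ (hM 0 1 0) ⟨(0,1), by decide⟩ ⟨(1,0), by decide⟩ (by decide) (by decide)⟩,
        ⟨uniqueOf _ (hM' 0 1 0) ⟨(0,1), by decide⟩ ⟨(1,0), by decide⟩ (by decide) (by decide)⟩⟩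
    · exact ⟨⟨uniqueOf _ (hM 0 0 1) ⟨(0,0), by decide⟩ ⟨(0,1), by decide⟩ (by decide) (by decide)⟩,
        ⟨uniqueOf _ (hM' 0 0 1) ⟨(0,1), by decide⟩ ⟨(0,1), by decide⟩ (by decide) (by decide)⟩⟩
  have part3 : ∀ i j k : Fin 2,
      ¬((i, j, k) = (0, 0, 0) ∨ (i, j, k) = (1, 0, 0) ∨
        (i, j, k) = (0, 1, 0) ∨ (i, j, k) = (0, 0, 1)) →
      Nonempty (Mset A i j k ≃ A) ∧ Nonempty (M'set A i j k ≃ A) := by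
    intro i j k h
    fin_cases i <;> fin_cases j <;> fin_cases k
    · exact absurd (Or.inl rfl) h
    · exact absurd (Or.inr (Or.inr (Or.inr rfl))) h
    · exact absurd (Or.inr (Or.inr (Or.inl rfl))) h
    · exact ⟨⟨equivARight _ (hM 0 1 1) ⟨(0,1), by decide⟩ (by decide) (by decide)⟩,
        ⟨equivARight _ (hM' 0 1 1) ⟨(0,0), by decide⟩ (by decide) (by decide)⟩⟩
    · exact absurd (Or.inr (Or.inl rfl)) h
    · exact ⟨⟨equivARight _ (hM 1 0 1) ⟨(1,0), by decide⟩ (by decide) (by decide)⟩,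
        ⟨equivALeft _ (hM' 1 0 1) ⟨(0,1), by decide⟩ (by decide) (by decide)⟩⟩
    · exact ⟨⟨equivALeft _ (hM 1 1 0) ⟨(0,0), by decide⟩ (by decide) (by decide)⟩,
        ⟨equivALeft _ (hM' 1 1 0) ⟨(1,0), by decide⟩ (by decide) (by decide)⟩⟩
    · exact ⟨⟨equivALeft _ (hM 1 1 1) ⟨(0,1), by decide⟩ (by decide) (by decide)⟩,
        ⟨equivARight _ (hM' 1 1 1) ⟨(1,0), by decide⟩ (by decide) (by decide)⟩⟩
  refine ⟨fun i j k => ?_, part2, part3⟩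
  by_cases h : (i, j, k) = (0, 0, 0) ∨ (i, j, k) = (1, 0, 0) ∨
      (i, j, k) = (0, 1, 0) ∨ (i, j, k) = (0, 0, 1)
  · obtain ⟨⟨u⟩, ⟨u'⟩⟩ := part2 i j k h
    exact ⟨@Equiv.ofUnique _ _ u u'⟩
  · obtain ⟨⟨e⟩, ⟨e'⟩⟩ := part3 i j k h
    exact ⟨e.trans e'.symm⟩
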